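/- In the FALKON setting, with S : H → L² bounded, C = S*S, Ĉ_n = Ŝ_n* Ŝ_n, and W, B, V as above, one has √M ‖S Ŝ_M* B W^{-1/2}‖ ≤ n^{-1/2} ‖S (Ĉ_n + λ I)^{-1/2}‖. -/

import Mathlib

open ContinuousLinearMap

set_option maxHeartbeats 2000000 in
/-- FALKON bound: `√M ‖S Ŝ_M* B W^{-1/2}‖ ≤ n^{-1/2} ‖S (Ĉ_n + λI)^{-1/2}‖`,
where `S : H → L²` is bounded, `Ĉ_n = Ŝ_n* Ŝ_n`, `B`, `V`, `W` are as in the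
generalized FALKON preconditioner, `Wh` is the positive square root of `W⁻¹`
and `Jn` the positive square root of `(Ĉ_n + λI)⁻¹`. -/
theorem stmt17 {H L2 : Type*} [NormedAddCommGroup H] [InnerProductSpace ℝ H]
    [CompleteSpace H] [TopologicalSpace.SeparableSpace H]
    [NormedAddCommGroup L2] [InnerProductSpace ℝ L2] [CompleteSpace L2]
    {n M q : ℕ} (hn : 0 < n) (hM : 0 < M) (lam : ℝ) (hlam : 0 < lam)
    (S : H →L[ℝ] L2)
    (Sn : H →L[ℝ] EuclideanSpace ℝ (Fin n))
    (SM : H →L[ℝ] EuclideanSpace ℝ (Fin M))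
    (D : EuclideanSpace ℝ (Fin M) →L[ℝ] EuclideanSpace ℝ (Fin M))
    (Q : EuclideanSpace ℝ (Fin q) →L[ℝ] EuclideanSpace ℝ (Fin M))
    (T Tinv A Ainv : EuclideanSpace ℝ (Fin q) →L[ℝ] EuclideanSpace ℝ (Fin q))
    (hT1 : T ∘L Tinv = 1) (hT2 : Tinv ∘L T = 1)
    (hA1 : A ∘L Ainv = 1) (hA2 : Ainv ∘L A = 1)
    (Cn : H →L[ℝ] H) (hCn : Cn = adjoint Sn ∘L Sn)
    (B : EuclideanSpace ℝ (Fin q) →L[ℝ] EuclideanSpace ℝ (Fin M))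
    (hB : B = (Real.sqrt n)⁻¹ • (D ∘L Q ∘L Tinv ∘L Ainv))
    (V : EuclideanSpace ℝ (Fin q) →L[ℝ] H)
    (hV : V = Real.sqrt (n * M) • (adjoint SM ∘L B ∘L A))
    (hVV : adjoint V ∘L V = 1)
    (W Wh : EuclideanSpace ℝ (Fin q) →L[ℝ] EuclideanSpace ℝ (Fin q))
    (hW : W = adjoint Ainv ∘L (adjoint V ∘L Cn ∘L V + lam • 1) ∘L Ainv)
    (hWhpos : Wh.IsPositive)
    (hWh1 : (Wh ∘L Wh) ∘L W = 1) (hWh2 : W ∘L (Wh ∘L Wh) = 1)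
    (Jn : H →L[ℝ] H) (hJnpos : Jn.IsPositive)
    (hJn1 : (Jn ∘L Jn) ∘L (Cn + lam • 1) = 1)
    (hJn2 : (Cn + lam • 1) ∘L (Jn ∘L Jn) = 1) :
    Real.sqrt M * ‖S ∘L adjoint SM ∘L B ∘L Wh‖ ≤
      (Real.sqrt n)⁻¹ * ‖S ∘L Jn‖ := by
  have hnM : Real.sqrt (n * M) = Real.sqrt n * Real.sqrt M := by
    push_cast
    exact Real.sqrt_mul (by positivity) _
  have hsn : (0:ℝ) < Real.sqrt n := Real.sqrt_pos.mpr (by exact_mod_cast hn)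
  have hsM : (0:ℝ) < Real.sqrt M := Real.sqrt_pos.mpr (by exact_mod_cast hM)
  have hsnM : (0:ℝ) < Real.sqrt (n * M) := by rw [hnM]; positivity
  -- commutation: W ∘L Wh = Wh ∘L W
  have hWcomm : W * Wh = Wh * W := by
    have h1 : Wh * (Wh * W) = 1 := by rw [← mul_assoc]; exact hWh1
    have h2 : (W * Wh) * Wh = 1 := by rw [mul_assoc]; exact hWh2
    calc W * Wh = (W * Wh) * (Wh * (Wh * W)) := by rw [h1, mul_one]
    _ = ((W * Wh) * Wh) * (Wh * W) := (mul_assoc _ _ _).symm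
    _ = Wh * W := by rw [h2, one_mul]
  -- pointwise identities
  have hJn1' : ∀ x : H, Jn (Jn ((Cn + lam • 1) x)) = x := fun x => by
    have := ContinuousLinearMap.ext_iff.mp hJn1 x
    simpa using this
  have hJn2' : ∀ x : H, (Cn + lam • 1) (Jn (Jn x)) = x := fun x => by
    have := ContinuousLinearMap.ext_iff.mp hJn2 x
    simpa using this
  have hWh1' : ∀ x, Wh (Wh (W x)) = x := fun x => by
    have := ContinuousLinearMap.ext_iff.mp hWh1 x
    simpa using this
  have hWh2' : ∀ x, W (Wh (Wh x)) = x := fun x => by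
    have := ContinuousLinearMap.ext_iff.mp hWh2 x
    simpa using this
  have hA1' : ∀ x, A (Ainv x) = x := fun x => by
    have := ContinuousLinearMap.ext_iff.mp hA1 x
    simpa using this
  -- self-adjointness facts
  have haJn : adjoint Jn = Jn := hJnpos.isSelfAdjoint.adjoint_eq
  have haWh : adjoint Wh = Wh := hWhpos.isSelfAdjoint.adjoint_eq
  have haCn : adjoint (Cn + lam • 1) = Cn + lam • 1 := by
    rw [map_add, hCn, adjoint_comp, adjoint_adjoint, ← hCn]
    congr 1
    rw [← star_eq_adjoint, star_smul, star_one]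
    simp
  -- the key map X
  set X : EuclideanSpace ℝ (Fin q) →L[ℝ] H :=
    (Jn ∘L (Cn + lam • 1)) ∘L (V ∘L (Ainv ∘L Wh)) with hX
  -- X* X = 1
  have hXadj : adjoint X = ((Wh ∘L (adjoint Ainv)) ∘L adjoint V) ∘L
      ((Cn + lam • 1) ∘L Jn) := by
    rw [hX, adjoint_comp, adjoint_comp, adjoint_comp, adjoint_comp, haJn, haWh, haCn]
  have hXX : adjoint X ∘L X = 1 := by
    refine ContinuousLinearMap.ext fun x => ?_
    rw [hXadj]
    simp only [hX, comp_apply, ContinuousLinearMap.one_apply]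
    rw [hJn2']
    have hVpt : adjoint V ((Cn + lam • 1) (V (Ainv (Wh x)))) =
        ((adjoint V ∘L Cn ∘L V + lam • 1) : _ →L[ℝ] _) (Ainv (Wh x)) := by
      have hvv := ContinuousLinearMap.ext_iff.mp hVV (Ainv (Wh x))
      simp only [comp_apply, one_apply] at hvv
      simp [comp_apply, map_add, map_smul, hvv]
    rw [hVpt]
    have hWpt : Wh (adjoint Ainv (((adjoint V ∘L Cn ∘L V + lam • 1) :
        _ →L[ℝ] _) (Ainv (Wh x)))) = Wh (W (Wh x)) := by
      rw [hW]
      simp only [comp_apply]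
    rw [hWpt]
    have hcp := ContinuousLinearMap.ext_iff.mp hWcomm (Wh x)
    simp only [ContinuousLinearMap.mul_apply] at hcp
    rw [← hcp, hWh2']
  have hXnorm : ‖X‖ ≤ 1 := by
    have h := norm_adjoint_comp_self X
    rw [hXX] at h
    have hone : ‖(1 : EuclideanSpace ℝ (Fin q) →L[ℝ] EuclideanSpace ℝ (Fin q))‖ ≤ 1 := by
      rw [ContinuousLinearMap.one_def]; exact norm_id_le
    nlinarith [norm_nonneg X]
  -- rewrite the main operator
  have hmain : S ∘L adjoint SM ∘L B ∘L Wh =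
      (Real.sqrt (n * M))⁻¹ • ((S ∘L Jn) ∘L X) := by
    ext x
    simp only [comp_apply, smul_apply, hX]
    rw [hJn1']
    have hVpt : V (Ainv (Wh x)) = Real.sqrt (n * M) • (adjoint SM) (B (Wh x)) := by
      rw [hV]
      simp only [smul_apply, comp_apply, hA1']
    rw [hVpt, map_smul, smul_smul, inv_mul_cancel₀ hsnM.ne', one_smul]
  rw [hmain, norm_smul ((Real.sqrt (n*M))⁻¹) ((S ∘L Jn) ∘L X)]
  have hle : ‖(S ∘L Jn) ∘L X‖ ≤ ‖S ∘L Jn‖ := by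
    calc ‖(S ∘L Jn) ∘L X‖ ≤ ‖S ∘L Jn‖ * ‖X‖ := opNorm_comp_le _ _
    _ ≤ ‖S ∘L Jn‖ * 1 := by
        exact mul_le_mul_of_nonneg_left hXnorm (norm_nonneg _)
    _ = ‖S ∘L Jn‖ := mul_one _
  have hcoef : Real.sqrt M * ‖(Real.sqrt (n*M) : ℝ)⁻¹‖ = (Real.sqrt n)⁻¹ := by
    rw [Real.norm_eq_abs, abs_of_pos (by positivity), hnM, mul_inv]
    field_simp
  calc Real.sqrt M * (‖(Real.sqrt (n*M) : ℝ)⁻¹‖ * ‖(S ∘L Jn) ∘L X‖)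
      = (Real.sqrt M * ‖(Real.sqrt (n*M) : ℝ)⁻¹‖) * ‖(S ∘L Jn) ∘L X‖ := by ring
    _ ≤ (Real.sqrt M * ‖(Real.sqrt (n*M) : ℝ)⁻¹‖) * ‖S ∘L Jn‖ := by
        exact mul_le_mul_of_nonneg_left hle (by positivity)
    _ = (Real.sqrt n)⁻¹ * ‖S ∘L Jn‖ := by rw [hcoef]
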